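/- Let n ≥ 1, let J be a real orthogonal n×n matrix, let λ > 0, let F₀ be an invertible real n×n matrix with |det F₀| = λ^{n/2}, and set M = F₀ (λ J) F₀⁻¹ (so that |det M| = λⁿ). Then the set of symmetric positive definite matrices P satisfying (det P)^{−2/n} · M P Mᵀ = P equals { F₀ A Aᵀ F₀ᵀ : A invertible real n×n matrix with A J = J A and det(A Aᵀ) = 1 }. -/

import Mathlib

open Matrix

lemma aux_posDef_conj {n : ℕ} {B Q : Matrix (Fin n) (Fin n) ℝ} (hQ : Q.PosDef)
    (hB : IsUnit B) : (B * Q * Bᵀ).PosDef := by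
  have hQH : Qᵀ = Q := by
    have := hQ.isHermitian
    rwa [IsHermitian, conjTranspose_eq_transpose_of_trivial] at this
  rw [Matrix.posDef_iff_dotProduct_mulVec]
  constructor
  · rw [IsHermitian, conjTranspose_eq_transpose_of_trivial]
    simp [transpose_mul, hQH, Matrix.mul_assoc]
  · intro x hx
    have hBT : IsUnit Bᵀ := (Matrix.isUnit_transpose _).mpr hB
    have hx' : Bᵀ *ᵥ x ≠ 0 := by
      intro h
      exact hx <| (Matrix.mulVec_injective_iff_isUnit.mpr hBT) (by simp [h])
    have := hQ.dotProduct_mulVec_pos hx'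
    simpa [Matrix.mul_assoc, ← Matrix.mulVec_mulVec, Matrix.dotProduct_mulVec,
      Matrix.mulVec_transpose, star_trivial] using this

open scoped MatrixOrder in
lemma aux_sqrt {n : ℕ} {Q : Matrix (Fin n) (Fin n) ℝ} (hQ : Q.PosSemidef) :
    ∃ A : Matrix (Fin n) (Fin n) ℝ, A * A = Q ∧ A.PosSemidef ∧
      ∀ S : Matrix (Fin n) (Fin n) ℝ, S.PosSemidef → S ^ 2 = Q → S = A := by
  refine ⟨CFC.sqrt Q, CFC.sqrt_mul_sqrt_self Q hQ.nonneg,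
    Matrix.nonneg_iff_posSemidef.mp (CFC.sqrt_nonneg Q), fun S hS h => ?_⟩
  rw [← CFC.sqrt_sq S hS.nonneg, h]

theorem stmt_7 (n : ℕ) (hn : 1 ≤ n) (J F₀ : Matrix (Fin n) (Fin n) ℝ)
    (lam : ℝ) (hlam : 0 < lam) (hJ : J * Jᵀ = 1) (hF₀ : IsUnit F₀)
    (hdet : |F₀.det| = lam ^ ((n : ℝ) / 2))
    (M : Matrix (Fin n) (Fin n) ℝ) (hMdef : M = F₀ * (lam • J) * F₀⁻¹) :
    {P : Matrix (Fin n) (Fin n) ℝ |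
        P.PosDef ∧ (P.det ^ (-(2 : ℝ) / n)) • (M * P * Mᵀ) = P} =
      {X : Matrix (Fin n) (Fin n) ℝ | ∃ A : Matrix (Fin n) (Fin n) ℝ, IsUnit A ∧
        A * J = J * A ∧ (A * Aᵀ).det = 1 ∧ X = F₀ * A * Aᵀ * F₀ᵀ} := by
  have hnR : (n : ℝ) ≠ 0 := Nat.cast_ne_zero.mpr (by omega)
  have hdu : IsUnit F₀.det := (Matrix.isUnit_iff_isUnit_det _).mp hF₀
  have hdne : F₀.det ≠ 0 := hdu.ne_zero
  have hJT : Jᵀ * J = 1 := mul_eq_one_comm.mp hJ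
  have hJdet : J.det * J.det = 1 := by
    have := congrArg Matrix.det hJ
    simpa [Matrix.det_mul] using this
  -- |det F₀|² = λⁿ
  have hdet2 : F₀.det ^ 2 = lam ^ n := by
    have h1 : F₀.det ^ 2 = (lam ^ ((n : ℝ) / 2)) ^ 2 := by rw [← sq_abs, hdet]
    rw [h1, sq, ← Real.rpow_add hlam]
    rw [show (n : ℝ) / 2 + (n : ℝ) / 2 = (n : ℝ) by ring, Real.rpow_natCast]
  -- scalar computation
  have hsc : ((lam ^ n : ℝ)) ^ (-(2 : ℝ) / n) = (lam ^ 2)⁻¹ := by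
    rw [← Real.rpow_natCast lam n, ← Real.rpow_mul hlam.le,
      show (n : ℝ) * (-(2 : ℝ) / n) = -2 by field_simp,
      show (-2 : ℝ) = -((2:ℕ):ℝ) by norm_num,
      Real.rpow_neg hlam.le, Real.rpow_natCast]
  -- cancellation lemmas
  have e1 : F₀⁻¹ * F₀ = 1 := Matrix.nonsing_inv_mul F₀ hdu
  have e2 : F₀ * F₀⁻¹ = 1 := Matrix.mul_nonsing_inv F₀ hdu
  have e3 : F₀ᵀ * (F₀⁻¹)ᵀ = 1 := by rw [← Matrix.transpose_mul, e1, Matrix.transpose_one]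
  have e4 : (F₀⁻¹)ᵀ * F₀ᵀ = 1 := by rw [← Matrix.transpose_mul, e2, Matrix.transpose_one]
  have c1 : ∀ X : Matrix (Fin n) (Fin n) ℝ, F₀⁻¹ * (F₀ * X) = X := fun X => by
    rw [← Matrix.mul_assoc, e1, Matrix.one_mul]
  have c2 : ∀ X : Matrix (Fin n) (Fin n) ℝ, F₀ * (F₀⁻¹ * X) = X := fun X => by
    rw [← Matrix.mul_assoc, e2, Matrix.one_mul]
  have c3 : ∀ X : Matrix (Fin n) (Fin n) ℝ, F₀ᵀ * ((F₀⁻¹)ᵀ * X) = X := fun X => by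
    rw [← Matrix.mul_assoc, e3, Matrix.one_mul]
  have c4 : ∀ X : Matrix (Fin n) (Fin n) ℝ, (F₀⁻¹)ᵀ * (F₀ᵀ * X) = X := fun X => by
    rw [← Matrix.mul_assoc, e4, Matrix.one_mul]
  have cJ : ∀ X : Matrix (Fin n) (Fin n) ℝ, J * (Jᵀ * X) = X := fun X => by
    rw [← Matrix.mul_assoc, hJ, Matrix.one_mul]
  have cJ' : ∀ X : Matrix (Fin n) (Fin n) ℝ, Jᵀ * (J * X) = X := fun X => by
    rw [← Matrix.mul_assoc, hJT, Matrix.one_mul]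
  ext P
  simp only [Set.mem_setOf_eq]
  constructor
  · rintro ⟨hP, heq⟩
    have hPd : 0 < P.det := hP.det_pos
    -- determinant of M
    have hMdet : M.det = lam ^ n * J.det := by
      rw [hMdef, Matrix.det_mul, Matrix.det_mul, Matrix.det_smul,
        Matrix.det_nonsing_inv, Ring.inverse_eq_inv']
      field_simp
      rw [Fintype.card_fin]; ring
    -- determinant chase
    have hdetloop : M.det ^ 2 * P.det = P.det ^ 3 := by
      have := congrArg Matrix.det heq
      rw [Matrix.det_smul, Matrix.det_mul, Matrix.det_mul, Matrix.det_transpose] at this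
      have hc : (P.det ^ (-(2:ℝ)/n)) ^ n = (P.det ^ 2)⁻¹ := by
        rw [← Real.rpow_natCast (P.det ^ (-(2:ℝ)/n)) n, ← Real.rpow_mul hPd.le,
          show (-(2:ℝ)/n) * n = -2 by field_simp,
          show (-2 : ℝ) = -((2:ℕ):ℝ) by norm_num,
          Real.rpow_neg hPd.le, Real.rpow_natCast]
      simp only [Fintype.card_fin] at this
      rw [hc] at this
      have h2 : P.det ^ 2 ≠ 0 := by positivity
      field_simp at this
      nlinarith [this]
    have hM2 : M.det ^ 2 = (lam ^ n) ^ 2 := by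
      rw [hMdet]; nlinarith [hJdet]
    have hPdet : P.det = lam ^ n := by
      have hl : (0:ℝ) < lam ^ n := pow_pos hlam n
      have hsq : M.det ^ 2 = P.det ^ 2 := by
        have h3 : P.det ^ 3 = P.det ^ 2 * P.det := by ring
        rw [h3] at hdetloop
        exact mul_right_cancel₀ hPd.ne' hdetloop
      rw [hM2] at hsq
      nlinarith [sq_nonneg (P.det - lam ^ n), hPd, hl]
    have hscP : (P.det ^ (-(2:ℝ)/n)) = (lam ^ 2)⁻¹ := by rw [hPdet]; exact hsc
    -- matrix identity
    rw [hscP, hMdef] at heq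
    have hMPM : (F₀ * (lam • J) * F₀⁻¹) * P * (F₀ * (lam • J) * F₀⁻¹)ᵀ
        = (lam * lam) • (F₀ * (J * (F₀⁻¹ * (P * ((F₀⁻¹)ᵀ * (Jᵀ * F₀ᵀ)))))) := by
      simp only [Matrix.transpose_mul, Matrix.transpose_smul, Matrix.transpose_nonsing_inv,
        Matrix.smul_mul, Matrix.mul_smul, smul_smul, Matrix.mul_assoc]
    rw [hMPM, smul_smul, show ((lam ^ 2)⁻¹ * (lam * lam)) = 1 by field_simp,
      one_smul] at heq
    -- heq : F₀ * (J * (F₀⁻¹ * (P * (F₀⁻¹ᵀ * (Jᵀ * F₀ᵀ))))) = P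
    set Q : Matrix (Fin n) (Fin n) ℝ := F₀⁻¹ * P * (F₀⁻¹)ᵀ with hQdef
    have hPQ : P = F₀ * Q * F₀ᵀ := by
      rw [hQdef]
      simp only [Matrix.mul_assoc, c2, e4, Matrix.mul_one]
    have hQcomm : J * (Q * Jᵀ) = Q := by
      have h := congrArg (fun X => F₀⁻¹ * X * (F₀⁻¹)ᵀ) heq
      simp only [Matrix.mul_assoc, c1, e3, Matrix.mul_one] at h
      rw [hQdef]
      simp only [Matrix.mul_assoc]
      exact h
    have hF₀invUnit : IsUnit F₀⁻¹ := by
      rw [Matrix.isUnit_iff_isUnit_det, Matrix.det_nonsing_inv, Ring.inverse_eq_inv']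
      exact isUnit_iff_ne_zero.mpr (inv_ne_zero hdne)
    have hQpos : Q.PosDef := aux_posDef_conj hP hF₀invUnit
    have hdetQ : Q.det = 1 := by
      rw [hQdef, Matrix.det_mul, Matrix.det_mul, Matrix.det_transpose,
        Matrix.det_nonsing_inv, Ring.inverse_eq_inv', hPdet]
      rw [← hdet2]
      field_simp
    obtain ⟨A, hAA, hApos, huniq⟩ := aux_sqrt hQpos.posSemidef
    have hAsymm : Aᵀ = A := by
      have := hApos.1
      rwa [IsHermitian, conjTranspose_eq_transpose_of_trivial] at this
    have hAunit : IsUnit A := by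
      rw [Matrix.isUnit_iff_isUnit_det, isUnit_iff_ne_zero]
      intro h
      have : Q.det = 0 := by rw [← hAA, Matrix.det_mul, h, mul_zero]
      rw [hdetQ] at this; norm_num at this
    have hSsq : (J * A * Jᵀ) ^ 2 = Q := by
      rw [pow_two]
      calc (J * A * Jᵀ) * (J * A * Jᵀ)
          = J * (A * (Jᵀ * (J * (A * Jᵀ)))) := by simp only [Matrix.mul_assoc]
        _ = J * (A * (A * Jᵀ)) := by rw [cJ']
        _ = J * ((A * A) * Jᵀ) := by rw [Matrix.mul_assoc]
        _ = Q := by rw [hAA, ← Matrix.mul_assoc]; rw [Matrix.mul_assoc]; exact hQcomm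
    have hSpos : (J * A * Jᵀ).PosSemidef := by
      have := hApos.mul_mul_conjTranspose_same J
      rwa [conjTranspose_eq_transpose_of_trivial] at this
    have hS : J * A * Jᵀ = A := by
      exact huniq _ hSpos hSsq
    have hcommA : A * J = J * A := by
      have := congrArg (fun X => X * J) hS
      simp only [Matrix.mul_assoc] at this
      rw [show Jᵀ * J = 1 from hJT] at this
      simpa [Matrix.mul_assoc] using this.symm
    refine ⟨A, hAunit, hcommA, ?_, ?_⟩
    · rw [hAsymm, hAA, hdetQ]
    · rw [hPQ, hAsymm, ← hAA]; simp only [Matrix.mul_assoc]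
  · rintro ⟨A, hA, hAJ, hd1, rfl⟩
    set X : Matrix (Fin n) (Fin n) ℝ := F₀ * A * Aᵀ * F₀ᵀ with hXdef
    have hXpos : X.PosDef := by
      have := aux_posDef_conj Matrix.PosDef.one (hF₀.mul hA)
      rw [Matrix.mul_one, Matrix.transpose_mul] at this
      rwa [hXdef, Matrix.mul_assoc, Matrix.mul_assoc, ← Matrix.mul_assoc]
    have hXdet : X.det = lam ^ n := by
      rw [hXdef, Matrix.mul_assoc, Matrix.mul_assoc, ← Matrix.mul_assoc A]
      rw [Matrix.det_mul, Matrix.det_mul, hd1, one_mul, Matrix.det_transpose, ← sq, hdet2]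
    refine ⟨hXpos, ?_⟩
    rw [hXdet, hsc, hMdef]
    have hAJT : Aᵀ * Jᵀ = Jᵀ * Aᵀ := by
      rw [← Matrix.transpose_mul, ← Matrix.transpose_mul, hAJ]
    have hAAJ : J * A * Aᵀ * Jᵀ = A * Aᵀ := by
      calc J * A * Aᵀ * Jᵀ = (J * A) * (Aᵀ * Jᵀ) := by simp only [Matrix.mul_assoc]
        _ = (A * J) * (Jᵀ * Aᵀ) := by rw [← hAJ, hAJT]
        _ = A * (J * (Jᵀ * Aᵀ)) := by simp only [Matrix.mul_assoc]
        _ = A * Aᵀ := by rw [cJ]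
    have hAAJ' : ∀ X : Matrix (Fin n) (Fin n) ℝ,
        J * (A * (Aᵀ * (Jᵀ * X))) = A * (Aᵀ * X) := fun X => by
      have h := congrArg (fun Y => Y * X) hAAJ
      simpa only [Matrix.mul_assoc] using h
    have hMXM : (F₀ * (lam • J) * F₀⁻¹) * X * (F₀ * (lam • J) * F₀⁻¹)ᵀ
        = (lam * lam) • X := by
      have expand : (F₀ * (lam • J) * F₀⁻¹) * X * (F₀ * (lam • J) * F₀⁻¹)ᵀ
          = (lam * lam) • (F₀ * (J * (F₀⁻¹ * (X * ((F₀⁻¹)ᵀ * (Jᵀ * F₀ᵀ)))))) := by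
        simp only [Matrix.transpose_mul, Matrix.transpose_smul, Matrix.transpose_nonsing_inv,
          Matrix.smul_mul, Matrix.mul_smul, smul_smul, Matrix.mul_assoc]
      rw [expand]
      congr 1
      rw [hXdef]
      simp only [Matrix.mul_assoc]
      simp only [c1, c3, c4]
      rw [hAAJ' F₀ᵀ]
    rw [hMXM, smul_smul, show ((lam ^ 2)⁻¹ * (lam * lam)) = 1 by field_simp, one_smul]
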